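/- Let n ≥ 3 be an integer, β ∈ (2, n), Λ ≥ 1, and define u on the exterior region {x ∈ ℝⁿ : |x| > Λ} by u(x) := _Λb(|x|). Then u is differentiable and for every x with |x| > Λ one has ∇u(x) / √(1 + |∇u(x)|²) = −Λ^{β−1} |x|^{−β} x. In particular, the horizontal part of the downward unit normal of the graph of u equals −Λ^{β−1}|x|^{−β} x. -/

import Mathlib

open MeasureTheory Set Filter


private lemma barrier_contAt {β : ℝ} (hβ : 2 < β) {s : ℝ} (hs : 1 < s) :
    ContinuousAt (fun s : ℝ => (s ^ (2 * (β - 1)) - 1) ^ (-(1 : ℝ) / 2)) s := by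
  have hs0 : (0:ℝ) < s := lt_trans one_pos hs
  have hpos : 0 < s ^ (2 * (β - 1)) - 1 := by
    have : 1 < s ^ (2 * (β - 1)) :=
      (Real.one_lt_rpow_iff_of_pos hs0).mpr (Or.inl ⟨hs, by linarith⟩)
    linarith
  have h1 : ContinuousAt (fun s : ℝ => s ^ (2 * (β - 1)) - 1) s :=
    (Real.continuousAt_rpow_const s _ (Or.inl hs0.ne')).sub continuousAt_const
  exact h1.rpow_const (Or.inl hpos.ne')

private lemma barrier_integrableOn {β : ℝ} (hβ : 2 < β) {c : ℝ} (hc : 1 < c) :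
    IntegrableOn (fun s : ℝ => (s ^ (2 * (β - 1)) - 1) ^ (-(1 : ℝ) / 2)) (Set.Ioi c) := by
  have hc0 : (0:ℝ) < c := lt_trans one_pos hc
  set e : ℝ := 2 * (β - 1) with he
  have he0 : (0:ℝ) < e := by simp only [he]; linarith
  set K : ℝ := 1 - c ^ (-e) with hK
  have hce : 1 < c ^ e := (Real.one_lt_rpow_iff_of_pos hc0).mpr (Or.inl ⟨hc, he0⟩)
  have hcne : c ^ (-e) < 1 := by
    rw [Real.rpow_neg hc0.le]
    exact inv_lt_one_of_one_lt₀ hce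
  have hK0 : 0 < K := by simp only [hK]; linarith
  have hcont : ContinuousOn (fun s : ℝ => (s ^ e - 1) ^ (-(1 : ℝ) / 2)) (Set.Ioi c) :=
    fun s hs => (barrier_contAt hβ (hc.trans hs)).continuousWithinAt
  refine Integrable.mono'
    ((integrableOn_Ioi_rpow_of_lt (by linarith : -(β-1) < -1) hc0).const_mul (K ^ (-(1:ℝ)/2)))
    (hcont.aestronglyMeasurable measurableSet_Ioi) ?_
  rw [ae_restrict_iff' measurableSet_Ioi]
  filter_upwards with s hs
  have hs1 : 1 < s := hc.trans hs
  have hs0 : (0:ℝ) < s := lt_trans one_pos hs1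
  have hse : 1 < s ^ e := (Real.one_lt_rpow_iff_of_pos hs0).mpr (Or.inl ⟨hs1, he0⟩)
  have hv : 0 < s ^ e - 1 := by linarith
  have hbd : K * s ^ e ≤ s ^ e - 1 := by
    have h1 : 1 ≤ (s / c) ^ e := by
      have := Real.rpow_le_rpow (le_of_lt one_pos) ((one_le_div hc0).mpr (le_of_lt hs)) he0.le
      rwa [Real.one_rpow] at this
    have h2 : (s / c) ^ e = s ^ e * c ^ (-e) := by
      rw [Real.div_rpow hs0.le hc0.le, Real.rpow_neg hc0.le, div_eq_mul_inv]
    have h3 : 1 ≤ s ^ e * c ^ (-e) := h2 ▸ h1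
    have : c ^ (-e) * s ^ e = s ^ e * c ^ (-e) := by ring
    nlinarith [Real.rpow_pos_of_pos hs0 e]
  rw [Real.norm_eq_abs, abs_of_nonneg (Real.rpow_nonneg hv.le _)]
  calc (s ^ e - 1) ^ (-(1:ℝ)/2) ≤ (K * s ^ e) ^ (-(1:ℝ)/2) := by
        exact Real.rpow_le_rpow_of_nonpos (by positivity) hbd (by norm_num)
    _ = K ^ (-(1:ℝ)/2) * s ^ (-(β-1)) := by
        rw [Real.mul_rpow hK0.le (Real.rpow_pos_of_pos hs0 e).le, ← Real.rpow_mul hs0.le]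
        congr 1
        simp only [he]; ring

private lemma barrier_tail_hasDerivAt {β : ℝ} (hβ : 2 < β) {t : ℝ} (ht : 1 < t) :
    HasDerivAt (fun a => ∫ s in Set.Ioi a, (s ^ (2 * (β - 1)) - 1) ^ (-(1 : ℝ) / 2))
      (-((t ^ (2 * (β - 1)) - 1) ^ (-(1 : ℝ) / 2))) t := by
  set f : ℝ → ℝ := fun s => (s ^ (2 * (β - 1)) - 1) ^ (-(1 : ℝ) / 2) with hf
  have hc1 : 1 < (1 + t) / 2 := by linarith
  have hct : (1 + t) / 2 < t := by linarith
  set c : ℝ := (1 + t) / 2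
  have hint : IntegrableOn f (Set.Ioi c) := barrier_integrableOn hβ hc1
  have hcont : ContinuousOn f (Set.Ioi c) :=
    fun s hs => (barrier_contAt hβ (hc1.trans hs)).continuousWithinAt
  have hev : (fun a => ∫ s in Set.Ioi a, f s) =ᶠ[nhds t]
      (fun a => (∫ s in Set.Ioi c, f s) - ∫ s in c..a, f s) := by
    filter_upwards [Ioi_mem_nhds hct] with a ha
    have hca : c ≤ a := le_of_lt ha
    have hsplit := MeasureTheory.setIntegral_union (Set.Ioc_disjoint_Ioi le_rfl)
      measurableSet_Ioi (hint.mono_set Set.Ioc_subset_Ioi_self)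
      (hint.mono_set (Set.Ioi_subset_Ioi hca)) (f := f) (μ := volume)
    rw [Set.Ioc_union_Ioi_eq_Ioi hca] at hsplit
    rw [intervalIntegral.integral_of_le hca]
    linarith [hsplit]
  have hd : HasDerivAt (fun a => (∫ s in Set.Ioi c, f s) - ∫ s in c..a, f s) (-(f t)) t := by
    refine HasDerivAt.const_sub _ (intervalIntegral.integral_hasDerivAt_right ?_ ?_ ?_)
    · exact intervalIntegrable_iff.mpr (by rw [Set.uIoc_of_le hct.le]; exact hint.mono_set Set.Ioc_subset_Ioi_self)
    · exact ⟨Set.Ioi c, Ioi_mem_nhds hct, (hcont.aestronglyMeasurable measurableSet_Ioi)⟩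
    · exact barrier_contAt hβ ht
  exact hd.congr_of_eventuallyEq hev

/-- The barrier function `_Λb(r) := Λ ∫_{r/Λ}^∞ (s^(2(β-1)) - 1)^(-1/2) ds`. -/
noncomputable def jangBarrier (β Λ r : ℝ) : ℝ :=
  Λ * ∫ s in Set.Ioi (r / Λ), (s ^ (2 * (β - 1)) - 1) ^ (-(1 : ℝ) / 2)

/-- Let `n ≥ 3`, `β ∈ (2, n)`, `Λ ≥ 1` and `u(x) := _Λb(|x|)` on
`{x ∈ ℝⁿ : |x| > Λ}`. Then `u` is differentiable and for every such `x`,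
`∇u(x)/√(1 + |∇u(x)|²) = -Λ^(β-1) |x|^(-β) x`. -/
theorem jangBarrier_graph_normal
    (n : ℕ) (hn : 3 ≤ n) (β : ℝ) (hβ₁ : 2 < β) (hβ₂ : β < n)
    (Λ : ℝ) (hΛ : 1 ≤ Λ)
    (x : EuclideanSpace ℝ (Fin n)) (hx : Λ < ‖x‖) :
    DifferentiableAt ℝ (fun y : EuclideanSpace ℝ (Fin n) => jangBarrier β Λ ‖y‖) x ∧
    (Real.sqrt (1 + ‖gradient (fun y : EuclideanSpace ℝ (Fin n) =>
        jangBarrier β Λ ‖y‖) x‖ ^ 2))⁻¹ •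
        gradient (fun y : EuclideanSpace ℝ (Fin n) => jangBarrier β Λ ‖y‖) x =
      (-(Λ ^ (β - 1) * ‖x‖ ^ (-β))) • x := by
  have hΛ0 : (0:ℝ) < Λ := lt_of_lt_of_le one_pos hΛ
  set r : ℝ := ‖x‖ with hrdef
  have hr : 0 < r := lt_trans hΛ0 hx
  have ht : 1 < r / Λ := (one_lt_div hΛ0).mpr hx
  set t : ℝ := r / Λ with htdef
  have ht0 : 0 < t := lt_trans one_pos ht
  set e : ℝ := 2 * (β - 1) with he
  have he0 : (0:ℝ) < e := by simp only [he]; linarith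
  have hte : 1 < t ^ e := (Real.one_lt_rpow_iff_of_pos ht0).mpr (Or.inl ⟨ht, he0⟩)
  set v : ℝ := t ^ e - 1 with hv
  have hv0 : 0 < v := by simp only [hv]; linarith
  set a : ℝ := v ^ (-(1:ℝ)/2) with ha
  have ha0 : 0 < a := Real.rpow_pos_of_pos hv0 _
  -- derivative of the radial profile at r^2
  have hsqrt : HasDerivAt Real.sqrt (1 / (2 * r)) (r ^ 2) := by
    have := Real.hasDerivAt_sqrt (x := r ^ 2) (by positivity)
    rwa [Real.sqrt_sq hr.le] at this
  have hdiv : HasDerivAt (fun s => Real.sqrt s / Λ) (1 / (2 * r) / Λ) (r ^ 2) :=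
    hsqrt.div_const Λ
  have htail : HasDerivAt (fun u => ∫ s in Set.Ioi u, (s ^ e - 1) ^ (-(1:ℝ)/2)) (-a) t := by
    have := barrier_tail_hasDerivAt hβ₁ ht
    simpa [← he, ← hv, ← ha] using this
  have htail' : HasDerivAt
      (fun s : ℝ => ∫ s in Set.Ioi (Real.sqrt s / Λ), (s ^ e - 1) ^ (-(1:ℝ)/2))
      (-a * (1 / (2 * r) / Λ)) (r ^ 2) := by
    have h := HasDerivAt.comp (r ^ 2)
      (by rwa [Real.sqrt_sq hr.le] : HasDerivAt
        (fun u => ∫ s in Set.Ioi u, (s ^ e - 1) ^ (-(1:ℝ)/2)) (-a) (Real.sqrt (r^2) / Λ)) hdiv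
    exact h
  have hφ : HasDerivAt
      (fun s : ℝ => Λ * ∫ s in Set.Ioi (Real.sqrt s / Λ), (s ^ e - 1) ^ (-(1:ℝ)/2))
      (Λ * (-a * (1 / (2 * r) / Λ))) (r ^ 2) := htail'.const_mul Λ
  -- Fréchet derivative of y ↦ ‖y‖² at x
  have hnsq : HasFDerivAt (fun y : EuclideanSpace ℝ (Fin n) => ‖y‖ ^ 2)
      (2 • (innerSL ℝ x)) x := (hasStrictFDerivAt_norm_sq x).hasFDerivAt
  have hcomp : HasFDerivAt (fun y : EuclideanSpace ℝ (Fin n) =>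
      Λ * ∫ s in Set.Ioi (Real.sqrt (‖y‖ ^ 2) / Λ), (s ^ e - 1) ^ (-(1:ℝ)/2))
      ((Λ * (-a * (1 / (2 * r) / Λ))) • (2 • (innerSL ℝ x))) x :=
    hφ.comp_hasFDerivAt (f := fun y : EuclideanSpace ℝ (Fin n) => ‖y‖ ^ 2) x hnsq
  have hfun : (fun y : EuclideanSpace ℝ (Fin n) =>
      Λ * ∫ s in Set.Ioi (Real.sqrt (‖y‖ ^ 2) / Λ), (s ^ e - 1) ^ (-(1:ℝ)/2)) =
      (fun y : EuclideanSpace ℝ (Fin n) => jangBarrier β Λ ‖y‖) := by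
    funext y
    rw [Real.sqrt_sq (norm_nonneg y)]
    simp only [jangBarrier, ← he]
  rw [hfun] at hcomp
  have hCLM : (InnerProductSpace.toDual ℝ (EuclideanSpace ℝ (Fin n))) ((-(a / r)) • x) =
      (Λ * (-a * (1 / (2 * r) / Λ))) • (2 • (innerSL ℝ x)) := by
    ext y
    simp only [InnerProductSpace.toDual_apply_apply, ContinuousLinearMap.smul_apply,
      innerSL_apply_apply, real_inner_smul_left]
    field_simp
    simp only [smul_eq_mul, nsmul_eq_mul, Nat.cast_ofNat]
    field_simp [hr.ne']
  have hG : HasGradientAt (fun y : EuclideanSpace ℝ (Fin n) => jangBarrier β Λ ‖y‖)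
      ((-(a / r)) • x) x := by
    rw [hasGradientAt_iff_hasFDerivAt, hCLM]
    exact hcomp
  refine ⟨hG.differentiableAt, ?_⟩
  rw [hG.gradient]
  have hnorm : ‖(-(a / r)) • x‖ = a := by
    rw [norm_smul, Real.norm_eq_abs, abs_neg, abs_of_pos (div_pos ha0 hr), ← hrdef]
    field_simp
  rw [hnorm]
  have ha2 : a ^ 2 = v⁻¹ := by
    rw [ha, ← Real.rpow_natCast (v ^ (-(1:ℝ)/2)) 2, ← Real.rpow_mul hv0.le]
    norm_num [Real.rpow_neg_one]
  have hkey : (1:ℝ) + a ^ 2 = (t ^ (β - 1) * a) ^ 2 := by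
    have htb : (t ^ (β - 1)) ^ 2 = t ^ e := by
      rw [← Real.rpow_natCast (t ^ (β-1)) 2, ← Real.rpow_mul ht0.le]
      congr 1
      simp only [he]; push_cast; ring
    rw [mul_pow, htb, ha2]
    have : t ^ e = v + 1 := by simp [hv]
    rw [this]
    field_simp
  have htba : 0 < t ^ (β - 1) * a := mul_pos (Real.rpow_pos_of_pos ht0 _) ha0
  rw [hkey, Real.sqrt_sq htba.le, smul_smul]
  congr 1
  -- scalar identity
  have hΛb : (0:ℝ) < Λ ^ (β - 1) := Real.rpow_pos_of_pos hΛ0 _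
  have hrb1 : (0:ℝ) < r ^ (β - 1) := Real.rpow_pos_of_pos hr _
  have h1 : (t:ℝ) ^ (β - 1) = r ^ (β - 1) / Λ ^ (β - 1) := by
    rw [htdef, Real.div_rpow hr.le hΛ0.le]
  have hrb : r ^ (β - 1) * r = r ^ β := by
    nth_rewrite 2 [← Real.rpow_one r]
    rw [← Real.rpow_add hr]; congr 1; ring
  have hrnb : r ^ (-β) = (r ^ β)⁻¹ := Real.rpow_neg hr.le β
  rw [h1, hrnb, ← hrb]
  field_simp
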